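/- Let q ≥ 2 be a prime power and let n, k, d be positive integers with k < n. If ∑_{l=0}^{k-1} ⌈d/q^l⌉ ≤ n, then d ≤ ⌊ n·q^{k-1}·(q-1) / (q^k - 1) ⌋. (In other words, the Griesmer bound for linear block codes implies the Plotkin bound.) -/
import Mathlib


/-- **Griesmer bound implies Plotkin bound.**
Let `q ≥ 2` be a prime power and `n, k, d` positive integers with `k < n`.
If `∑_{l=0}^{k-1} ⌈d/q^l⌉ ≤ n` (the Griesmer inequality), then
`d ≤ ⌊ n·q^{k-1}·(q-1) / (q^k - 1) ⌋` (the Plotkin bound). -/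
theorem griesmer_implies_plotkin (q n k d : ℕ) (hq : IsPrimePow q) (hq2 : 2 ≤ q)
    (hn : 0 < n) (hk : 0 < k) (hd : 0 < d) (hkn : k < n)
    (hgriesmer : ∑ l ∈ Finset.range k, ⌈(d : ℚ) / (q : ℚ) ^ l⌉ ≤ (n : ℤ)) :
    (d : ℤ) ≤ ⌊((n : ℚ) * (q : ℚ) ^ (k - 1) * ((q : ℚ) - 1)) / ((q : ℚ) ^ k - 1)⌋ := by
  obtain ⟨m, rfl⟩ : ∃ m, k = m + 1 := ⟨k - 1, (Nat.succ_pred_eq_of_pos hk).symm⟩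
  have hq2Q : (2 : ℚ) ≤ (q : ℚ) := by exact_mod_cast hq2
  have hq1 : (1 : ℚ) < (q : ℚ) := by linarith
  have hq0 : (0 : ℚ) < (q : ℚ) := by linarith
  have hpow1 : (1 : ℚ) < (q : ℚ) ^ (m + 1) := one_lt_pow₀ hq1 (Nat.succ_ne_zero m)
  have hpos : (0 : ℚ) < (q : ℚ) ^ m * ((q : ℚ) - 1) := mul_pos (pow_pos hq0 m) (by linarith)
  -- the sum is at most n
  have hS : ∑ l ∈ Finset.range (m + 1), (d : ℚ) / (q : ℚ) ^ l ≤ (n : ℚ) := by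
    calc ∑ l ∈ Finset.range (m + 1), (d : ℚ) / (q : ℚ) ^ l
        ≤ ∑ l ∈ Finset.range (m + 1), ((⌈(d : ℚ) / (q : ℚ) ^ l⌉ : ℤ) : ℚ) :=
          Finset.sum_le_sum fun l _ => Int.le_ceil _
      _ = ((∑ l ∈ Finset.range (m + 1), ⌈(d : ℚ) / (q : ℚ) ^ l⌉ : ℤ) : ℚ) := by push_cast; ring
      _ ≤ (n : ℚ) := by exact_mod_cast hgriesmer
  -- evaluate the geometric sum after clearing denominators
  have hsum : (∑ l ∈ Finset.range (m + 1), (d : ℚ) / (q : ℚ) ^ l) * ((q : ℚ) ^ m * ((q : ℚ) - 1))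
      = (d : ℚ) * ((q : ℚ) ^ (m + 1) - 1) := by
    have h1 : ∀ l ∈ Finset.range (m + 1),
        (d : ℚ) / (q : ℚ) ^ l * (q : ℚ) ^ m = (d : ℚ) * (q : ℚ) ^ (m - l) := by
      intro l hl
      rw [Finset.mem_range] at hl
      rw [pow_sub₀ _ (ne_of_gt hq0) (Nat.lt_succ_iff.mp hl)]
      ring
    calc (∑ l ∈ Finset.range (m + 1), (d : ℚ) / (q : ℚ) ^ l) * ((q : ℚ) ^ m * ((q : ℚ) - 1))
        = (∑ l ∈ Finset.range (m + 1), (d : ℚ) / (q : ℚ) ^ l * (q : ℚ) ^ m) * ((q : ℚ) - 1) := by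
          rw [← mul_assoc, Finset.sum_mul]
      _ = (∑ l ∈ Finset.range (m + 1), (d : ℚ) * (q : ℚ) ^ (m - l)) * ((q : ℚ) - 1) := by
          rw [Finset.sum_congr rfl h1]
      _ = (d : ℚ) * ((∑ l ∈ Finset.range (m + 1), (q : ℚ) ^ l) * ((q : ℚ) - 1)) := by
          rw [← Finset.mul_sum]
          have := Finset.sum_range_reflect (fun l => (q : ℚ) ^ l) (m + 1)
          simp only [Nat.add_sub_cancel] at this
          rw [← this]
          ring
      _ = (d : ℚ) * ((q : ℚ) ^ (m + 1) - 1) := by rw [geom_sum_mul]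
  have key : (d : ℚ) * ((q : ℚ) ^ (m + 1) - 1) ≤ (n : ℚ) * ((q : ℚ) ^ m * ((q : ℚ) - 1)) := by
    rw [← hsum]
    exact mul_le_mul_of_nonneg_right hS hpos.le
  rw [Int.le_floor]
  push_cast
  rw [le_div_iff₀ (by linarith : (0 : ℚ) < (q : ℚ) ^ (m + 1) - 1)]
  simpa using key.trans_eq (by ring)
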